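/- Let H be an n×n complex Hermitian matrix, let p ≥ 1 be an integer, and let S : ℝ → M_n(ℂ) be (p+1)-times continuously differentiable such that S(t) is unitary for every t, S(0) = I, and S⁽ᵏ⁾(0) = (−iH)ᵏ for all 0 ≤ k ≤ p. Set J(t) := S′(t)·S(t)* + iH. Then for every τ ≥ 0, S(τ) − exp(−iHτ) = (1/(p−1)!) · ∫₀^τ ∫₀^{τ₁} exp(−iH(τ−τ₁)) · J⁽ᵖ⁾(τ₂) · S(τ₁) · (τ₁−τ₂)^{p−1} dτ₂ dτ₁. -/

import Mathlib

open Matrix MeasureTheory intervalIntegral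

attribute [local instance] Matrix.linftyOpNormedAddCommGroup Matrix.linftyOpNormedRing
  Matrix.linftyOpNormedAlgebra

section aux
variable {E : Type*} [NormedAddCommGroup E] [NormedSpace ℝ E]

theorem auxHD {f : ℝ → E} {N k : ℕ} (hf : ContDiff ℝ (N : ℕ∞) f) (hk : k < N) (t : ℝ) :
    HasDerivAt (iteratedDeriv k f) (iteratedDeriv (k + 1) f t) t := by
  have h := (hf.differentiable_iteratedDeriv k (by exact_mod_cast hk)).differentiableAt (x := t)
  rw [iteratedDeriv_succ]
  exact h.hasDerivAt

end aux

section leib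
variable {A : Type*} [NormedRing A] [NormedAlgebra ℝ A]

theorem auxLeib {f g : ℝ → A} {N : ℕ} (hf : ContDiff ℝ (N : ℕ∞) f) (hg : ContDiff ℝ (N : ℕ∞) g) :
    ∀ k, k ≤ N → ∀ t, iteratedDeriv k (fun s => f s * g s) t
      = ∑ j ∈ Finset.range (k + 1),
          (k.choose j) • (iteratedDeriv j f t * iteratedDeriv (k - j) g t) := by
  intro k
  induction k with
  | zero => intro _ t; simp
  | succ k ih =>
    intro hk t
    have ihf := funext (ih (Nat.le_of_succ_le hk))
    rw [iteratedDeriv_succ, ihf]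
    have hder : HasDerivAt (fun t => ∑ j ∈ Finset.range (k + 1),
          (k.choose j) • (iteratedDeriv j f t * iteratedDeriv (k - j) g t))
        (∑ j ∈ Finset.range (k + 1), (k.choose j) •
          (iteratedDeriv (j + 1) f t * iteratedDeriv (k - j) g t
            + iteratedDeriv j f t * iteratedDeriv (k - j + 1) g t)) t := by
      refine HasDerivAt.fun_sum fun j hj => ?_
      rw [Finset.mem_range] at hj
      have h1 : j < N := lt_of_lt_of_le (by omega : j < k + 1) hk
      have h2 : k - j < N := lt_of_lt_of_le (by omega : k - j < k + 1) hk
      exact ((auxHD hf h1 t).mul (auxHD hg h2 t)).const_smul (k.choose j)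
    rw [hder.deriv]
    set a := fun j => iteratedDeriv j f t with ha
    set b := fun j => iteratedDeriv j g t with hb
    simp only [smul_add, Finset.sum_add_distrib]
    have hRHS : ∑ j ∈ Finset.range (k + 1 + 1), (k+1).choose j • (a j * b (k + 1 - j))
        = (∑ j ∈ Finset.range (k + 1), k.choose j • (a (j+1) * b (k - j)))
        + ((∑ j ∈ Finset.range (k + 1), k.choose (j+1) • (a (j+1) * b (k - j)))
            + a 0 * b (k + 1)) := by
      rw [Finset.sum_range_succ']
      simp only [Nat.choose_succ_succ, add_smul, Nat.succ_sub_succ, Nat.choose_zero_right,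
        one_smul, Nat.sub_zero, Finset.sum_add_distrib]
      abel
    have hLHS2 : ∑ j ∈ Finset.range (k + 1), k.choose j • (a j * b (k - j + 1))
        = (∑ j ∈ Finset.range (k + 1), k.choose (j+1) • (a (j+1) * b (k - j)))
        + a 0 * b (k + 1) := by
      rw [Finset.sum_range_succ' _ k,
        Finset.sum_range_succ (fun j => k.choose (j+1) • (a (j+1) * b (k - j))) k]
      simp only [Nat.choose_succ_self, zero_smul, add_zero, Nat.choose_zero_right, one_smul,
        Nat.sub_zero]
      congr 1
      refine Finset.sum_congr rfl fun j hj => ?_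
      rw [Finset.mem_range] at hj
      have h' : k - (j + 1) + 1 = k - j := by omega
      rw [h']
    rw [hLHS2, hRHS]
end leib

section clm
variable {E F : Type*} [NormedAddCommGroup E] [NormedSpace ℝ E]
  [NormedAddCommGroup F] [NormedSpace ℝ F]

theorem auxCLM (L : E →L[ℝ] F) {f : ℝ → E} {N : ℕ} (hf : ContDiff ℝ (N : ℕ∞) f) :
    ∀ k, k ≤ N → ∀ t, iteratedDeriv k (fun s => L (f s)) t = L (iteratedDeriv k f t) := by
  intro k
  induction k with
  | zero => intro _ t; simp
  | succ k ih =>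
    intro hk t
    rw [iteratedDeriv_succ, funext (ih (Nat.le_of_succ_le hk))]
    have h : HasDerivAt (fun s => L (iteratedDeriv k f s)) (L (iteratedDeriv (k + 1) f t)) t :=
      L.hasFDerivAt.comp_hasDerivAt t (auxHD hf (by omega) t)
    exact h.deriv
end clm

section taylor
variable {E : Type*} [NormedAddCommGroup E] [NormedSpace ℝ E] [CompleteSpace E]

theorem auxTaylor {g : ℝ → E} {p : ℕ} (hp : 1 ≤ p) (hg : ContDiff ℝ (p : ℕ∞) g)
    (h0 : ∀ k, k < p → iteratedDeriv k g 0 = 0) (x : ℝ) :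
    g x = (((p - 1).factorial : ℝ))⁻¹ •
      ∫ t in (0:ℝ)..x, ((x - t) ^ (p - 1)) • iteratedDeriv p g t := by
  obtain ⟨q, rfl⟩ : ∃ q, p = q + 1 := ⟨p - 1, by omega⟩
  simp only [Nat.add_sub_cancel]
  set U : ℕ → ℝ → E :=
    fun k t => (((k.factorial : ℝ))⁻¹ * (x - t) ^ k) • iteratedDeriv (k + 1) g t with hU
  set F : ℝ → E := fun t =>
    g t + ∑ j ∈ Finset.range q,
      ((((j+1).factorial : ℝ))⁻¹ * (x - t) ^ (j+1)) • iteratedDeriv (j+1) g t with hF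
  have hderF : ∀ t, HasDerivAt F (U q t) t := by
    intro t
    have h0' : HasDerivAt g (U 0 t) t := by
      have := auxHD (k := 0) hg (by omega) t
      simpa [hU, iteratedDeriv_zero] using this
    have hterm : ∀ j ∈ Finset.range q,
        HasDerivAt (fun t => ((((j+1).factorial : ℝ))⁻¹ * (x - t) ^ (j+1)) •
            iteratedDeriv (j+1) g t) (U (j+1) t - U j t) t := by
      intro j hj
      rw [Finset.mem_range] at hj
      have hc : HasDerivAt (fun t => (((j+1).factorial : ℝ))⁻¹ * (x - t) ^ (j+1))
          ((((j+1).factorial : ℝ))⁻¹ * (-(j+1) * (x - t) ^ j)) t :=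
        (monomial_has_deriv_aux t x j).const_mul _
      have hd := hc.smul (auxHD (k := j+1) hg (by omega) t)
      convert hd using 1
      · rfl
      have hfac : (((j+1).factorial : ℝ))⁻¹ * (-(j+1) * (x - t) ^ j)
          = -(((j.factorial : ℝ))⁻¹ * (x - t) ^ j) := by
        rw [Nat.factorial_succ]
        push_cast
        have : ((j.factorial : ℝ)) ≠ 0 := Nat.cast_ne_zero.mpr j.factorial_ne_zero
        field_simp
      rw [hfac, neg_smul]
      simp only [hU]
      abel
    have h := h0'.fun_add (HasDerivAt.fun_sum hterm)
    rw [Finset.sum_range_sub (fun j => U j t)] at h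
    simpa using h
  have hcontU : Continuous (U q) := by
    apply Continuous.smul
    · exact (continuous_const.mul ((continuous_const.sub continuous_id).pow q))
    · exact hg.continuous_iteratedDeriv (q+1) (by exact_mod_cast le_refl _)
  have key := intervalIntegral.integral_eq_sub_of_hasDerivAt (f := F)
    (fun t _ => hderF t) (hcontU.intervalIntegrable 0 x)
  have hFx : F x = g x := by
    simp [hF, sub_self, zero_pow (Nat.succ_ne_zero _)]
  have hF0 : F 0 = 0 := by
    have h1 : g 0 = 0 := by simpa [iteratedDeriv_zero] using h0 0 (by omega)
    rw [hF]
    simp only [h1, zero_add]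
    refine Finset.sum_eq_zero fun j hj => ?_
    rw [Finset.mem_range] at hj
    rw [h0 (j+1) (by omega), smul_zero]
  rw [hFx, hF0, sub_zero] at key
  rw [← key, ← intervalIntegral.integral_smul]
  congr 1
  funext t
  rw [smul_smul]
end taylor

section duhamel
set_option maxHeartbeats 1000000
open NormedSpace
variable {A : Type*} [NormedRing A] [NormedAlgebra ℝ A] [CompleteSpace A]

theorem auxEE (C : A) (s t : ℝ) : exp (s • C) * exp (t • C) = exp ((s + t) • C) := by
  rw [add_smul, NormedSpace.exp_add_of_commute_of_mem_ball (𝕂 := ℝ) (((Commute.refl C).smul_left s).smul_right t)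
    ((expSeries_radius_eq_top ℝ A).symm ▸ edist_lt_top _ _) ((expSeries_radius_eq_top ℝ A).symm ▸ edist_lt_top _ _)]

theorem auxDuhamel (C : A) (S J : ℝ → A)
    (hS : ∀ t, HasDerivAt S (J t * S t + C * S t) t) (hS0 : S 0 = 1)
    (hcont : Continuous fun t => J t * S t) (τ : ℝ) :
    S τ - exp (τ • C) = ∫ t in (0:ℝ)..τ, exp ((τ - t) • C) * (J t * S t) := by
  have hE : ∀ t : ℝ, HasDerivAt (fun u : ℝ => exp (u • C)) (exp (t • C) * C) t :=
    fun t => hasDerivAt_exp_smul_const C t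
  have hEneg : ∀ t : ℝ, HasDerivAt (fun u : ℝ => exp ((-u) • C))
      ((-1 : ℝ) • (exp ((-t) • C) * C)) t := by
    intro t
    exact HasDerivAt.scomp t (hE (-t)) (hasDerivAt_neg t)
  set F : ℝ → A := fun t => exp ((-t) • C) * S t with hF
  have hderF : ∀ t, HasDerivAt F (exp ((-t) • C) * (J t * S t)) t := by
    intro t
    have h := (hEneg t).mul (hS t)
    convert h using 1
    · rfl
    simp only [neg_smul, one_smul, mul_add, neg_mul, mul_assoc]
    abel
  have hcontE : Continuous fun t : ℝ => exp ((-t) • C) :=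
    continuous_iff_continuousAt.2 fun t => (hEneg t).continuousAt
  have hint : IntervalIntegrable (fun t => exp ((-t) • C) * (J t * S t)) MeasureTheory.volume 0 τ :=
    (hcontE.mul hcont).intervalIntegrable 0 τ
  have key := intervalIntegral.integral_eq_sub_of_hasDerivAt (f := F)
    (fun t _ => hderF t) hint
  have hF0 : F 0 = 1 := by simp [hF, hS0, NormedSpace.exp_zero]
  rw [hF0] at key
  have h1 : exp (τ • C) * exp ((-τ) • C) = 1 := by
    rw [auxEE, add_neg_cancel, zero_smul, exp_zero]
  have L := (ContinuousLinearMap.mul ℝ A (exp (τ • C))).intervalIntegral_comp_comm hint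
  calc S τ - exp (τ • C)
      = exp (τ • C) * (F τ - 1) := by
        rw [mul_sub, mul_one, hF, ← mul_assoc, h1, one_mul]
    _ = exp (τ • C) * ∫ t in (0:ℝ)..τ, exp ((-t) • C) * (J t * S t) := by rw [key]
    _ = ∫ t in (0:ℝ)..τ, exp (τ • C) * (exp ((-t) • C) * (J t * S t)) := by
        simpa using L.symm
    _ = ∫ t in (0:ℝ)..τ, exp ((τ - t) • C) * (J t * S t) := by
        congr 1
        funext t
        rw [← mul_assoc, auxEE, ← sub_eq_add_neg]
end duhamel

theorem auxAddConst {E : Type*} [NormedAddCommGroup E] [NormedSpace ℝ E]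
    (f : ℝ → E) (c : E) (k : ℕ) (hk : 1 ≤ k) :
    iteratedDeriv k (fun t => f t + c) = iteratedDeriv k f := by
  obtain ⟨m, rfl⟩ : ∃ m, k = m + 1 := ⟨k - 1, by omega⟩
  have hd : (deriv fun t => f t + c) = deriv f := funext fun x => deriv_add_const (f := f) (x := x) c
  rw [iteratedDeriv_succ', iteratedDeriv_succ', hd]


/-- **Local-error-sum representation of Trotter error.** If `S : ℝ → Mₙ(ℂ)` is a
`(p+1)`-times continuously differentiable family of unitary matrices with `S 0 = I` and
`S⁽ᵏ⁾(0) = (−iH)ᵏ` for `0 ≤ k ≤ p`, then with `J(t) = S′(t)·S(t)* + iH`, for every `τ ≥ 0`: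
`S τ − exp(−iHτ) = (1/(p−1)!)·∫₀^τ ∫₀^{τ₁} exp(−iH(τ−τ₁))·J⁽ᵖ⁾(τ₂)·S(τ₁)·(τ₁−τ₂)^{p−1} dτ₂ dτ₁`. -/
theorem trotter_local_error_sum_representation
    (n : ℕ) (H : Matrix (Fin n) (Fin n) ℂ) (hH : H.IsHermitian)
    (p : ℕ) (hp : 1 ≤ p)
    (S : ℝ → Matrix (Fin n) (Fin n) ℂ) (hS : ContDiff ℝ (p + 1) S)
    (hunit : ∀ t, S t ∈ Matrix.unitaryGroup (Fin n) ℂ) (hS0 : S 0 = 1)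
    (hderivs : ∀ k ≤ p, iteratedDeriv k S 0 = ((-Complex.I) • H) ^ k)
    (J : ℝ → Matrix (Fin n) (Fin n) ℂ)
    (hJ : ∀ t, J t = deriv S t * (S t)ᴴ + Complex.I • H)
    (τ : ℝ) (hτ : 0 ≤ τ) :
    S τ - NormedSpace.exp ((-Complex.I * (τ : ℂ)) • H) =
      (((p - 1).factorial : ℝ))⁻¹ •
        ∫ τ₁ in (0:ℝ)..τ, ∫ τ₂ in (0:ℝ)..τ₁,
          ((τ₁ - τ₂) ^ (p - 1)) •
            (NormedSpace.exp ((-Complex.I * ((τ - τ₁ : ℝ) : ℂ)) • H) *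
              iteratedDeriv p J τ₂ * S τ₁) := by
  set B : Matrix (Fin n) (Fin n) ℂ := Complex.I • H with hB
  set C : Matrix (Fin n) (Fin n) ℂ := -B with hC
  have hexp_eq : ∀ r : ℝ, NormedSpace.exp ((-Complex.I * (r : ℂ)) • H)
      = NormedSpace.exp (r • C) := by
    intro r
    congr 1
    rw [hC, hB, ← neg_smul, ← Complex.coe_smul, smul_smul, mul_comm]
  have hp1 : ContDiff ℝ (p : ℕ∞) S := hS.of_le (le_add_right le_rfl)
  have hSder : ContDiff ℝ (p : ℕ∞) (deriv S) := (contDiff_succ_iff_deriv.mp hS).2.2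
  let L : Matrix (Fin n) (Fin n) ℂ →L[ℝ] Matrix (Fin n) (Fin n) ℂ :=
    LinearMap.toContinuousLinearMap
      { toFun := fun X => Xᴴ
        map_add' := fun X Y => Matrix.conjTranspose_add X Y
        map_smul' := fun r X => by
          ext i j
          simp [Matrix.conjTranspose_apply, Complex.real_smul] }
  have hLapp : ∀ X : Matrix (Fin n) (Fin n) ℂ, L X = Xᴴ := fun X => rfl
  have hSH : ContDiff ℝ (p : ℕ∞) (fun t => (S t)ᴴ) := L.contDiff.comp hp1
  have hJfun : J = fun t => deriv S t * (S t)ᴴ + B := funext hJ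
  have hJp : ContDiff ℝ (p : ℕ∞) J := by
    rw [hJfun]; exact (hSder.mul hSH).add contDiff_const
  -- vanishing derivatives of the product part
  have hprod : ∀ k, k < p → iteratedDeriv k (fun t => deriv S t * (S t)ᴴ) 0
      = (∑ j ∈ Finset.range (k + 1), ((-1 : ℂ)) ^ (j + 1) * (k.choose j : ℂ)) • B ^ (k + 1) := by
    intro k hk
    rw [auxLeib hSder hSH k (le_of_lt hk) 0, Finset.sum_smul]
    refine Finset.sum_congr rfl fun j hj => ?_
    rw [Finset.mem_range] at hj
    have e1 : iteratedDeriv j (deriv S) 0 = ((-1 : ℂ) • B) ^ (j + 1) := by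
      erw [← iteratedDeriv_succ', hderivs (j + 1) (by omega)]
      congr 1
      rw [hB, neg_smul, neg_smul, one_smul]
    have e2 : iteratedDeriv (k - j) (fun t => (S t)ᴴ) 0 = B ^ (k - j) := by
      have h := auxCLM L hp1 (k - j) (by omega) 0
      erw [show (fun t => (S t)ᴴ) = (fun s => L (S s)) from rfl, h, hLapp,
        hderivs (k - j) (by omega), Matrix.conjTranspose_pow]
      congr 1
      rw [Matrix.conjTranspose_smul, hB, hH.eq]
      simp
    rw [e1, e2, smul_pow, smul_mul_assoc, ← pow_add]
    have hjk : j + 1 + (k - j) = k + 1 := by omega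
    rw [hjk, ← Nat.cast_smul_eq_nsmul ℂ, smul_smul, mul_comm ((k.choose j : ℂ))]
  have hJ0 : ∀ k, k < p → iteratedDeriv k J 0 = 0 := by
    intro k hk
    rcases Nat.eq_zero_or_pos k with rfl | hk1
    · rw [iteratedDeriv_zero, hJ 0]
      have hd : deriv S 0 = -B := by
        have h := hderivs 1 hp
        rw [iteratedDeriv_one] at h
        erw [h, pow_one, hB, neg_smul]
      rw [hd, hS0, Matrix.conjTranspose_one, mul_one, neg_add_cancel]
    · rw [hJfun, auxAddConst _ _ k hk1, hprod k (by omega)]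
      have hsum : (∑ j ∈ Finset.range (k + 1), ((-1 : ℂ)) ^ (j + 1) * (k.choose j : ℂ)) = 0 := by
        have h2 : (∑ j ∈ Finset.range (k + 1), ((-1 : ℂ)) ^ j * (k.choose j : ℂ)) = 0 := by
          have h3 := Int.alternating_sum_range_choose_of_ne (n := k) (by omega)
          exact_mod_cast congrArg (Int.cast : ℤ → ℂ) h3
        have h4 : (∑ j ∈ Finset.range (k + 1), ((-1 : ℂ)) ^ (j + 1) * (k.choose j : ℂ))
            = -(∑ j ∈ Finset.range (k + 1), ((-1 : ℂ)) ^ j * (k.choose j : ℂ)) := by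
          rw [← Finset.sum_neg_distrib]
          exact Finset.sum_congr rfl fun j _ => by ring
        rw [h4, h2, neg_zero]
      rw [hsum, zero_smul]
  -- Duhamel
  have hSdiff : Differentiable ℝ S := hS.differentiable (by simp)
  have hstar : ∀ t, (S t)ᴴ * S t = 1 := by
    intro t
    have h := Unitary.star_mul_self_of_mem (hunit t)
    rwa [Matrix.star_eq_conjTranspose] at h
  have hSeq : ∀ t, HasDerivAt S (J t * S t + C * S t) t := by
    intro t
    have h := (hSdiff t).hasDerivAt
    have he : J t * S t + C * S t = deriv S t := by
      rw [hJ t, add_mul, mul_assoc, hstar t, mul_one, hC, neg_mul]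
      abel
    rwa [he]
  have hcontJS : Continuous fun t => J t * S t := hJp.continuous.mul hp1.continuous
  have duh := auxDuhamel C S J hSeq hS0 hcontJS τ
  erw [hexp_eq τ, duh]
  simp only [hexp_eq]
  have htay : ∀ t : ℝ, J t = (((p - 1).factorial : ℝ))⁻¹ •
      ∫ s in (0:ℝ)..t, ((t - s) ^ (p - 1)) • iteratedDeriv p J s :=
    fun t => auxTaylor hp hJp hJ0 t
  have hptwise : ∀ t : ℝ, NormedSpace.exp ((τ - t) • C) * (J t * S t)
      = (((p - 1).factorial : ℝ))⁻¹ • ∫ s in (0:ℝ)..t, ((t - s) ^ (p - 1)) •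
          (NormedSpace.exp ((τ - t) • C) * iteratedDeriv p J s * S t) := by
    intro t
    set Et := NormedSpace.exp ((τ - t) • C) with hEt
    set L2 : Matrix (Fin n) (Fin n) ℂ →L[ℝ] Matrix (Fin n) (Fin n) ℂ :=
      ((ContinuousLinearMap.mul ℝ _).flip (S t)).comp
        (ContinuousLinearMap.mul ℝ _ Et) with hL2
    have hL2app : ∀ X, L2 X = Et * X * S t := fun X => rfl
    have hint2 := Continuous.intervalIntegrable (μ := MeasureTheory.volume)
        (u := fun s => ((t - s) ^ (p - 1)) • iteratedDeriv p J s)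
      (((continuous_const.sub continuous_id).pow _).smul
        (hJp.continuous_iteratedDeriv p (le_refl _))) 0 t
    have hcomm := L2.intervalIntegral_comp_comm hint2
    conv_lhs => rw [htay t]
    rw [smul_mul_assoc, mul_smul_comm]
    congr 1
    have h5 : Et * ((∫ s in (0:ℝ)..t, ((t - s) ^ (p - 1)) • iteratedDeriv p J s) * S t)
        = L2 (∫ s in (0:ℝ)..t, ((t - s) ^ (p - 1)) • iteratedDeriv p J s) := by
      rw [hL2app, mul_assoc]
    erw [h5, ← hcomm]
    congr 1
    funext s
    exact (_root_.map_smul L2 _ _).trans (congrArg _ (hL2app _))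
  have hfinal : ∫ t in (0:ℝ)..τ, NormedSpace.exp ((τ - t) • C) * (J t * S t)
      = ∫ t in (0:ℝ)..τ, (((p - 1).factorial : ℝ))⁻¹ •
          ∫ s in (0:ℝ)..t, ((t - s) ^ (p - 1)) •
            (NormedSpace.exp ((τ - t) • C) * iteratedDeriv p J s * S t) := by
    simp only [hptwise]
  erw [hfinal, intervalIntegral.integral_smul]
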